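/- Let $A = \mathbb{C}[x_0,\ldots,x_m]/I$ be an artinian complete intersection algebra with $I$ generated by $m+1$ quadrics, and assume $m \geq 4$. Then for any two distinct points $[z], [w] \in \mathbb{P}(A_1)$, the subspace $\langle z, w \rangle A_1 \subseteq A_2$ has dimension at least $2m - 1$. -/

import Mathlib

set_option maxHeartbeats 1600000

open MvPolynomial

noncomputable section

/-- The linear form with coefficient vector `p`. -/
def linform {n : ℕ} (p : Fin n → ℂ) : MvPolynomial (Fin n) ℂ :=
  ∑ i, MvPolynomial.C (p i) * MvPolynomial.X i

/-- The apolarity pairing `⟨f, g⟩ = ∑_α f_α g_α α!` between polynomial spaces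
(`f` viewed in `S^d U^*`, `g` in `S^d U`). -/
def apolar {n : ℕ} (f g : MvPolynomial (Fin n) ℂ) : ℂ :=
  ∑ α ∈ f.support, f.coeff α * g.coeff α * ∏ i, ((α i).factorial : ℂ)

namespace Stmt10Aux

lemma linform_isHomogeneous {n : ℕ} (p : Fin n → ℂ) : (linform p).IsHomogeneous 1 :=
  MvPolynomial.IsHomogeneous.sum _ _ _ fun i _ => (isHomogeneous_X ℂ i).C_mul _

lemma coeff_single_linform {n : ℕ} (p : Fin n → ℂ) (i : Fin n) :
    coeff (Finsupp.single i 1) (linform p) = p i := by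
  have : ∀ j : Fin n, coeff (Finsupp.single i 1) (MvPolynomial.C (p j) * X j)
      = if j = i then p j else 0 := by
    intro j
    rw [coeff_C_mul, MvPolynomial.coeff_X']
    by_cases h : j = i
    · simp [h]
    · simp [h, (Finsupp.single_left_injective one_ne_zero).ne h]
  simp [linform, coeff_sum, this]

lemma linform_injective {n : ℕ} : Function.Injective (linform (n := n)) := by
  intro a b hab
  funext i
  rw [← coeff_single_linform a i, ← coeff_single_linform b i, hab]

lemma degree_one_eq_single {n : ℕ} (d : Fin n →₀ ℕ) (hd : d.degree = 1) :
    ∃ i, d = Finsupp.single i 1 := by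
  classical
  have hne : d.support.Nonempty := by
    rw [Finset.nonempty_iff_ne_empty]
    intro h
    rw [Finsupp.degree_apply, h] at hd
    simp at hd
  obtain ⟨i, hi⟩ := hne
  refine ⟨i, ?_⟩
  have hdi : d i ≤ 1 := hd ▸ Finsupp.le_degree i d
  have hdi1 : d i = 1 := le_antisymm hdi (Nat.one_le_iff_ne_zero.2 (Finsupp.mem_support_iff.1 hi))
  have hrest : ∑ j ∈ d.support.erase i, d j = 0 := by
    have := Finset.add_sum_erase _ d hi
    rw [Finsupp.degree_apply] at hd
    omega
  ext j
  by_cases hj : j = i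
  · simp [hj, hdi1]
  · rw [Finsupp.single_eq_of_ne' (fun h => hj h.symm)]
    by_cases hjs : j ∈ d.support
    · exact (Finset.sum_eq_zero_iff.1 hrest j (Finset.mem_erase.2 ⟨hj, hjs⟩))
    · exact Finsupp.notMem_support_iff.1 hjs



lemma isHomogeneous_one_eq_linform {n : ℕ} (v : MvPolynomial (Fin n) ℂ)
    (hv : v.IsHomogeneous 1) : v = linform (fun i => coeff (Finsupp.single i 1) v) := by
  apply MvPolynomial.ext
  intro d
  by_cases hd : d.degree = 1
  · obtain ⟨i, rfl⟩ := degree_one_eq_single d hd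
    rw [coeff_single_linform]
  · have h1 : coeff d v = 0 := by
      by_contra h
      exact hd (by simpa [Finsupp.degree_eq_weight_one, Pi.one_def] using hv h)
    have h2 : coeff d (linform fun i => coeff (Finsupp.single i 1) v) = 0 := by
      by_contra h
      refine hd ?_
      have := (linform_isHomogeneous (fun i => coeff (Finsupp.single i 1) v)) h
      simpa [Finsupp.degree_eq_weight_one, Pi.one_def] using this
    rw [h1, h2]



lemma homogeneousComponent_mul_right {σ : Type*} (h q : MvPolynomial σ ℂ) {d e : ℕ}
    (hq : q.IsHomogeneous d) (hde : d ≤ e) :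
    homogeneousComponent e (h * q) = homogeneousComponent (e - d) h * q := by
  classical
  conv_lhs => rw [← h.support_sum_monomial_coeff, Finset.sum_mul, map_sum]
  conv_rhs => rw [← h.support_sum_monomial_coeff, map_sum, Finset.sum_mul]
  refine Finset.sum_congr rfl fun δ hδ => ?_
  have h1 : (monomial δ (coeff δ h) * q).IsHomogeneous (δ.degree + d) :=
    (isHomogeneous_monomial _ rfl).mul hq
  rw [homogeneousComponent_of_mem h1,
    homogeneousComponent_of_mem (isHomogeneous_monomial (n := δ.degree) _ rfl)]
  by_cases hh : e - d = δ.degree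
  · rw [if_pos hh, if_pos (by omega)]
  · rw [if_neg hh, if_neg (by omega), zero_mul]

lemma homog_mem_ideal_span {σ : Type*} [Fintype σ] {k : ℕ} (g : Fin k → MvPolynomial σ ℂ)
    (hg : ∀ j, (g j).IsHomogeneous 2) {f : MvPolynomial σ ℂ} {e : ℕ} (hf : f.IsHomogeneous e)
    (hde : 2 ≤ e) (hfI : f ∈ Ideal.span (Set.range g)) :
    ∃ h : Fin k → MvPolynomial σ ℂ,
      (∀ j, (h j).IsHomogeneous (e - 2)) ∧ ∑ j, h j * g j = f := by
  obtain ⟨c, hc⟩ := Ideal.mem_span_range_iff_exists_fun.1 hfI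
  refine ⟨fun j => homogeneousComponent (e - 2) (c j), fun j =>
    homogeneousComponent_isHomogeneous _ _, ?_⟩
  have : ∀ j, homogeneousComponent (e - 2) (c j) * g j
      = homogeneousComponent e (c j * g j) := fun j =>
    (homogeneousComponent_mul_right (c j) (g j) (hg j) hde).symm
  rw [Finset.sum_congr rfl fun j _ => this j, ← map_sum, hc,
    homogeneousComponent_of_mem hf, if_pos rfl]

lemma quadric_mem_span {σ : Type*} [Fintype σ] {k : ℕ} (g : Fin k → MvPolynomial σ ℂ)
    (hg : ∀ j, (g j).IsHomogeneous 2) {f : MvPolynomial σ ℂ} (hf : f.IsHomogeneous 2)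
    (hfI : f ∈ Ideal.span (Set.range g)) : f ∈ Submodule.span ℂ (Set.range g) := by
  obtain ⟨h, hh, hsum⟩ := homog_mem_ideal_span g hg hf le_rfl hfI
  rw [← hsum]
  refine Submodule.sum_mem _ fun j _ => ?_
  have h0 : h j = MvPolynomial.C (coeff 0 (h j)) := by
    have h00 := homogeneousComponent_zero (h j)
    rwa [homogeneousComponent_of_mem (hh j), if_pos rfl] at h00
  rw [h0, ← smul_eq_C_mul]
  exact Submodule.smul_mem _ _ (Submodule.subset_span ⟨j, rfl⟩)

lemma fdeg_single {σ : Type*} (i : σ) (m : ℕ) : (Finsupp.single i m).degree = m := by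
  rcases eq_or_ne m 0 with rfl | h
  · simp [Finsupp.degree]
  · simp [Finsupp.degree_apply, Finsupp.support_single_ne_zero _ h]

lemma fdeg_add {σ : Type*} (a b : σ →₀ ℕ) : (a + b).degree = a.degree + b.degree := by
  simp [Finsupp.degree_eq_weight_one, map_add]

lemma homog_support_degree {σ : Type*} {p : MvPolynomial σ ℂ} {e : ℕ}
    (hp : p.IsHomogeneous e) {δ : σ →₀ ℕ} (hδ : δ ∈ p.support) : δ.degree = e := by
  rw [Finsupp.degree_eq_weight_one]
  exact hp (mem_support_iff.1 hδ)

theorem exists_common_zero {n k : ℕ} (hk : k < n) (c : Fin k → MvPolynomial (Fin n) ℂ)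
    (hc : ∀ j, (c j).IsHomogeneous 2) :
    ∃ y : Fin n → ℂ, y ≠ 0 ∧ ∀ j, eval y (c j) = 0 := by
  classical
  by_contra hcon
  push_neg at hcon
  set I := Ideal.span (Set.range c) with hI
  have hrad : ∀ i : Fin n, X i ∈ I.radical := by
    intro i
    rw [← vanishingIdeal_zeroLocus_eq_radical (K := ℂ)]
    rw [mem_vanishingIdeal_iff]
    intro x hx
    rcases eq_or_ne x 0 with rfl | hx0
    · simp
    · obtain ⟨j, hj⟩ := hcon x hx0
      exact absurd (hx _ (Ideal.subset_span ⟨j, rfl⟩)) hj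
  have hradN : ∀ i : Fin n, ∃ N, X i ^ N ∈ I := fun i => hrad i
  choose Nf hNf using hradN
  set N := (Finset.univ.sup Nf) + 2 with hN
  have hN2 : 2 ≤ N := by omega
  have hXN : ∀ i, X i ^ N ∈ I := by
    intro i
    have hle : Nf i ≤ N := by
      have := Finset.le_sup (f := Nf) (Finset.mem_univ i); omega
    have : X (R := ℂ) i ^ N = X i ^ (N - Nf i) * X i ^ Nf i := by
      rw [← pow_add]; congr 1; omega
    rw [this]
    exact Ideal.mul_mem_left _ _ (hNf i)
  have hdec : ∀ i : Fin n, ∃ h : Fin k → MvPolynomial (Fin n) ℂ,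
      (∀ j, (h j).IsHomogeneous (N - 2)) ∧ ∑ j, h j * c j = X i ^ N := by
    intro i
    refine homog_mem_ideal_span c hc ?_ hN2 (hXN i)
    simpa using (isHomogeneous_X ℂ i).pow N
  choose hh hhom hsum using hdec
  set B := N ^ n * n ^ (n - 1) with hB
  set D := n * B with hD
  set SS : Set (MvPolynomial (Fin n) ℂ) :=
    { x | ∃ α : Fin n →₀ ℕ, ∃ β : Fin k → ℕ, (∀ i, α i < N) ∧
         (α.degree + 2 * ∑ j, β j ≤ D) ∧ x = monomial α 1 * ∏ j, c j ^ β j } with hSS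
  set U := Submodule.span ℂ SS with hU
  -- Claim 1 : spanning
  have claim1 : ∀ t (α : Fin n →₀ ℕ) (β : Fin k → ℕ), α.degree = t →
      α.degree + 2 * ∑ j, β j ≤ D → monomial α 1 * ∏ j, c j ^ β j ∈ U := by
    intro t
    induction t using Nat.strong_induction_on with
    | _ t IH =>
    intro α β hdeg hbud
    by_cases hsmall : ∀ i, α i < N
    · exact Submodule.subset_span ⟨α, β, hsmall, hbud, rfl⟩
    · push_neg at hsmall
      obtain ⟨i, hiN⟩ := hsmall
      set α' := α - Finsupp.single i N with hα'
      have hle : Finsupp.single i N ≤ α := Finsupp.single_le_iff.2 hiN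
      have hsum' : α' + Finsupp.single i N = α := tsub_add_cancel_of_le hle
      have hdeg' : α'.degree + N = t := by
        rw [← hdeg, ← hsum', fdeg_add, fdeg_single]
      have htN : N ≤ t := by
        have h1 : α i ≤ α.degree := Finsupp.le_degree i α
        omega
      have hmono : monomial α 1 = monomial (R := ℂ) α' 1 * X i ^ N := by
        rw [X_pow_eq_monomial, monomial_mul, hsum', mul_one]
      have hprod : ∀ j : Fin k, c j * ∏ j', c j' ^ β j'
          = ∏ j', c j' ^ (Function.update β j (β j + 1)) j' := by
        intro j
        have hfe : ∀ j', c j' ^ (Function.update β j (β j + 1)) j'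
            = Function.update (fun j' => c j' ^ β j') j (c j ^ (β j + 1)) j' := by
          intro j'
          rcases eq_or_ne j' j with rfl | hne
          · simp
          · simp [Function.update_of_ne hne]
        rw [Finset.prod_congr rfl fun j' _ => hfe j']
        rw [Finset.prod_update_of_mem (Finset.mem_univ j),
          ← Finset.mul_prod_erase Finset.univ (fun j' => c j' ^ β j') (Finset.mem_univ j),
          pow_succ, Finset.erase_eq]
        ring
      have key : monomial α 1 * ∏ j', c j' ^ β j'
          = ∑ j, ∑ δ ∈ (hh i j).support,
              coeff δ (hh i j) •
                (monomial (α' + δ) 1 * ∏ j', c j' ^ (Function.update β j (β j + 1)) j') := by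
        calc monomial α 1 * ∏ j', c j' ^ β j'
            = monomial α' 1 * ((∑ j, hh i j * c j) * ∏ j', c j' ^ β j') := by
              rw [hsum i, hmono, mul_assoc]
          _ = ∑ j, monomial α' 1 * (hh i j * (c j * ∏ j', c j' ^ β j')) := by
              rw [Finset.sum_mul, Finset.mul_sum]
              exact Finset.sum_congr rfl fun j _ => by ring
          _ = ∑ j, ∑ δ ∈ (hh i j).support,
              coeff δ (hh i j) •
                (monomial (α' + δ) 1 * ∏ j', c j' ^ (Function.update β j (β j + 1)) j') := by
              refine Finset.sum_congr rfl fun j _ => ?_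
              rw [← hprod j]
              conv_lhs => rw [← (hh i j).support_sum_monomial_coeff]
              rw [Finset.sum_mul, Finset.mul_sum]
              refine Finset.sum_congr rfl fun δ hδ => ?_
              rw [← mul_assoc, ← smul_mul_assoc]
              congr 1
              rw [monomial_mul, smul_monomial, one_mul, smul_eq_mul, mul_one]
      rw [key]
      refine Submodule.sum_mem _ fun j _ => Submodule.sum_mem _ fun δ hδ => Submodule.smul_mem _ _ ?_
      have hδdeg : δ.degree = N - 2 := homog_support_degree (hhom i j) hδ
      have hdeg'' : (α' + δ).degree = t - 2 := by rw [fdeg_add]; omega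
      have hsumβ : ∑ j', (Function.update β j (β j + 1)) j' = (∑ j', β j') + 1 := by
        rw [Finset.sum_update_of_mem (Finset.mem_univ j)]
        have := Finset.add_sum_erase Finset.univ β (Finset.mem_univ j)
        rw [Finset.erase_eq] at this
        omega
      exact IH (t - 2) (by omega) _ _ hdeg'' (by omega)
  -- upper bound on finrank U
  set T := (Fin n → Fin N) × (Fin k → Fin (D + 1)) with hT
  set F : T → MvPolynomial (Fin n) ℂ := fun t =>
    monomial (Finsupp.equivFunOnFinite.symm fun i => (t.1 i : ℕ)) 1
      * ∏ j, c j ^ (t.2 j : ℕ) with hF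
  have hUF : U ≤ Submodule.span ℂ (Set.range F) := by
    rw [hU, Submodule.span_le]
    rintro x ⟨α, β, hα, hbud, rfl⟩
    apply Submodule.subset_span
    have hβ : ∀ j, β j < D + 1 := by
      intro j
      have : β j ≤ ∑ j', β j' := Finset.single_le_sum (fun _ _ => Nat.zero_le _) (Finset.mem_univ j)
      omega
    refine ⟨(fun i => ⟨α i, hα i⟩, fun j => ⟨β j, hβ j⟩), ?_⟩
    show monomial (Finsupp.equivFunOnFinite.symm fun i => α i) 1 * _ = _
    rw [show (fun i => α i) = ⇑α from rfl, Finsupp.equivFunOnFinite_symm_coe]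
  have hfinF : FiniteDimensional ℂ (Submodule.span ℂ (Set.range F)) :=
    FiniteDimensional.span_of_finite ℂ (Set.finite_range F)
  have hfinU : FiniteDimensional ℂ U := Submodule.finiteDimensional_of_le hUF
  have hrankU : Module.finrank ℂ U ≤ N ^ n * (D + 1) ^ k := by
    have h1 : Module.finrank ℂ U ≤ Module.finrank ℂ (Submodule.span ℂ (Set.range F)) :=
      Submodule.finrank_mono hUF
    have h2 : Module.finrank ℂ (Submodule.span ℂ (Set.range F)) ≤ Fintype.card T := by
      refine le_trans (finrank_span_le_card (Set.range F)) ?_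
      rw [Set.toFinset_range]
      exact le_trans (Finset.card_image_le) (by simp)
    have h3 : Fintype.card T = N ^ n * (D + 1) ^ k := by
      simp [hT, Fintype.card_fun]
    omega
  -- lower bound on finrank U
  have hmem : ∀ a : Fin n → Fin (B + 1),
      monomial (Finsupp.equivFunOnFinite.symm fun i => (a i : ℕ)) 1 ∈ U := by
    intro a
    have hdegle : (Finsupp.equivFunOnFinite.symm fun i => (a i : ℕ)).degree ≤ D := by
      rw [Finsupp.degree]
      refine le_trans (Finset.sum_le_sum_of_subset (Finset.subset_univ _)) ?_
      refine le_trans (Finset.sum_le_card_nsmul _ _ B (fun i _ => ?_)) (by simp [hD, mul_comm])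
      simpa [Finsupp.coe_equivFunOnFinite_symm] using Fin.is_le (a i)
    have := claim1 _ (Finsupp.equivFunOnFinite.symm fun i => (a i : ℕ)) 0 rfl (by simpa using hdegle)
    simpa using this
  have hinj : Function.Injective
      (fun a : Fin n → Fin (B + 1) => (Finsupp.equivFunOnFinite.symm fun i => (a i : ℕ))) := by
    intro a b hab
    funext i
    have h2 : (fun i => ((a i : ℕ))) = fun i => ((b i : ℕ)) :=
      Finsupp.equivFunOnFinite.symm.injective hab
    exact Fin.val_injective (congrFun h2 i)
  have hliP : LinearIndependent ℂ
      (fun a : Fin n → Fin (B + 1) =>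
        monomial (R := ℂ) (Finsupp.equivFunOnFinite.symm fun i => (a i : ℕ)) 1) := by
    have hb := (basisMonomials (Fin n) ℂ).linearIndependent
    have := hb.comp _ hinj
    rw [coe_basisMonomials] at this
    exact this
  have hliU : LinearIndependent ℂ
      (fun a : Fin n → Fin (B + 1) =>
        (⟨monomial (Finsupp.equivFunOnFinite.symm fun i => (a i : ℕ)) 1, hmem a⟩ : U)) := by
    apply LinearIndependent.of_comp U.subtype
    exact hliP
  have hlow : (B + 1) ^ n ≤ Module.finrank ℂ U := by
    have := hliU.fintype_card_le_finrank
    simpa [Fintype.card_fun] using this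
  -- numeric contradiction
  have hn1 : 1 ≤ n := by omega
  have hN1 : 1 ≤ N := by omega
  have hkey : N ^ n * (D + 1) ^ k < (B + 1) ^ n := by
    have e1 : (D + 1) ^ k ≤ (D + 1) ^ (n - 1) :=
      Nat.pow_le_pow_right (by omega) (by omega)
    have e2 : (D + 1) ^ (n - 1) ≤ (n * (B + 1)) ^ (n - 1) :=
      Nat.pow_le_pow_left (by rw [hD, Nat.mul_succ]; omega) _
    have e3 : (n * (B + 1)) ^ (n - 1) = n ^ (n - 1) * (B + 1) ^ (n - 1) := Nat.mul_pow _ _ _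
    have e4 : N ^ n * (n ^ (n - 1) * (B + 1) ^ (n - 1)) = B * (B + 1) ^ (n - 1) := by
      rw [hB]; ring
    have e5 : B * (B + 1) ^ (n - 1) < (B + 1) * (B + 1) ^ (n - 1) := by
      have : 0 < (B + 1) ^ (n - 1) := Nat.pow_pos (by omega)
      exact mul_lt_mul_of_pos_right (by omega) this
    have e6 : (B + 1) * (B + 1) ^ (n - 1) = (B + 1) ^ n := by
      conv_rhs => rw [show n = (n - 1) + 1 by omega]
      rw [pow_succ]; ring
    calc N ^ n * (D + 1) ^ k ≤ N ^ n * (n ^ (n - 1) * (B + 1) ^ (n - 1)) := by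
          refine Nat.mul_le_mul_left _ (le_trans e1 (by rw [← e3] at *; exact e2))
      _ = B * (B + 1) ^ (n - 1) := e4
      _ < (B + 1) * (B + 1) ^ (n - 1) := e5
      _ = (B + 1) ^ n := e6
  omega

def dot {n : ℕ} (u p : Fin n → ℂ) : ℂ := ∑ i, u i * p i

lemma dot_add {n : ℕ} (u p q : Fin n → ℂ) : dot u (p + q) = dot u p + dot u q := by
  simp [dot, mul_add, Finset.sum_add_distrib]

lemma dot_single {n : ℕ} (u : Fin n → ℂ) (j : Fin n) (t : ℂ) :
    dot u (Pi.single j t) = u j * t := by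
  simp [dot, Pi.single_apply, mul_ite, Finset.sum_ite_eq']

lemma eval_linform {n : ℕ} (p y : Fin n → ℂ) : eval y (linform p) = dot p y := by
  simp [linform, dot]

lemma linform_zero {n : ℕ} : linform (0 : Fin n → ℂ) = 0 := by simp [linform]

lemma linform_smul {n : ℕ} (c : ℂ) (p : Fin n → ℂ) :
    linform (c • p) = MvPolynomial.C c * linform p := by
  simp [linform, Finset.mul_sum, mul_assoc, map_mul]



lemma exists_smul_of_dot {n : ℕ} (ζ ω : Fin n → ℂ) (hζ : ζ ≠ 0)
    (h : ∀ p, dot ζ p = 0 → dot ω p = 0) : ∃ c : ℂ, ω = c • ζ := by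
  have hi : ∃ i₀, ζ i₀ ≠ 0 := by
    by_contra hc; push_neg at hc; exact hζ (funext fun i => hc i)
  obtain ⟨i₀, hi₀⟩ := hi
  refine ⟨ω i₀ / ζ i₀, funext fun j => ?_⟩
  have key : ω j * ζ i₀ + ω i₀ * (-ζ j) = 0 := by
    have h0 : dot ζ (Pi.single j (ζ i₀) + Pi.single i₀ (-ζ j)) = 0 := by
      rw [dot_add, dot_single, dot_single]; ring
    have := h _ h0
    rwa [dot_add, dot_single, dot_single] at this
  show ω j = (ω i₀ / ζ i₀) * ζ j
  field_simp
  linear_combination key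
  
lemma pair_rel {n : ℕ} (ζ ω a b : Fin n → ℂ) (hζ : ζ ≠ 0)
    (hns : ¬ ∃ c : ℂ, ω = c • ζ)
    (h : linform ζ * linform a + linform ω * linform b = 0) :
    ∃ c : ℂ, a = c • ω ∧ b = -(c • ζ) := by
  obtain ⟨p₀, hp₀z, hp₀w⟩ : ∃ p₀, dot ζ p₀ = 0 ∧ dot ω p₀ ≠ 0 := by
    by_contra hc
    push_neg at hc
    exact hns (exists_smul_of_dot ζ ω hζ fun p hp => hc p hp)
  have he : ∀ p : Fin n → ℂ, dot ζ p * dot a p + dot ω p * dot b p = 0 := by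
    intro p
    have := congrArg (eval p) h
    simpa [map_add, map_mul, eval_linform] using this
  have hb0 : dot b p₀ = 0 := by
    have := he p₀
    rw [hp₀z, zero_mul, zero_add] at this
    exact (mul_eq_zero.1 this).resolve_left hp₀w
  have hbker : ∀ p, dot ζ p = 0 → dot b p = 0 := by
    intro p hp
    have h1 := he p
    rw [hp, zero_mul, zero_add] at h1
    have h2 := he (p + p₀)
    rw [dot_add, dot_add, dot_add, dot_add, hp, hp₀z, add_zero, zero_mul, zero_add, hb0, add_zero] at h2
    -- h2 : (dot ω p + dot ω p₀) * dot b p = 0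
    rcases mul_eq_zero.1 h2 with h3 | h3
    · rcases mul_eq_zero.1 h1 with h4 | h4
      · have : dot ω p₀ = 0 := by rw [h4] at h3; simpa using h3
        exact absurd this hp₀w
      · exact h4
    · exact h3
  obtain ⟨c', hc'⟩ := exists_smul_of_dot ζ b hζ hbker
  have hb : linform b = MvPolynomial.C c' * linform ζ := by rw [hc', linform_smul]
  have hfac : linform ζ * (linform a + MvPolynomial.C c' * linform ω) = 0 := by
    rw [hb] at h
    linear_combination h
  have hζne : linform ζ ≠ 0 := by
    intro h0
    exact hζ (linform_injective (by rw [h0, linform_zero]))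
  have hfac2 : linform a + MvPolynomial.C c' * linform ω = 0 :=
    (mul_eq_zero.1 hfac).resolve_left hζne
  have ha : a = (-c') • ω := by
    apply linform_injective
    rw [linform_smul, map_neg, neg_mul]
    linear_combination hfac2
  refine ⟨-c', ha, ?_⟩
  rw [hc', neg_smul, neg_neg]


lemma dot_smul {n : ℕ} (u : Fin n → ℂ) (c : ℂ) (p : Fin n → ℂ) :
    dot u (c • p) = c * dot u p := by
  simp only [dot, Pi.smul_apply, smul_eq_mul, Finset.mul_sum]
  exact Finset.sum_congr rfl fun i _ => by ring

lemma finrank_span_singleton_le {V : Type*} [AddCommGroup V] [Module ℂ V] (x : V) :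
    Module.finrank ℂ (Submodule.span ℂ {x}) ≤ 1 := by
  rcases eq_or_ne x 0 with rfl | h
  · rw [Submodule.span_zero_singleton]
    simp
  · rw [finrank_span_singleton h]


/-- `linform` as a linear map. -/
def linformₗ {n : ℕ} : (Fin n → ℂ) →ₗ[ℂ] MvPolynomial (Fin n) ℂ where
  toFun := linform
  map_add' a b := by simp [linform, map_add, add_mul, Finset.sum_add_distrib]
  map_smul' c a := by
    simp [linform, Finset.smul_sum, smul_eq_C_mul, mul_assoc, map_mul, Pi.smul_apply,
      smul_eq_mul]

end Stmt10Aux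

open Stmt10Aux

/-- let `A = ℂ[x₀,…,xₘ]/I` be an artinian complete intersection of `m+1`
quadrics with `m ≥ 4`. For any two distinct points `[z], [w]` of `ℙ(A_1)` (i.e. two linearly
independent linear forms `z, w`), the subspace `⟨z,w⟩A_1 ⊆ A_2` spanned by all products
`z·v, w·v` with `v` linear has dimension at least `2m - 1`. -/
theorem stmt10 (m : ℕ) (hm : 4 ≤ m)
    (q : Fin (m + 1) → MvPolynomial (Fin (m + 1)) ℂ)
    (hhom : ∀ i, (q i).IsHomogeneous 2)
    (hci : ∀ p : Fin (m + 1) → ℂ, (∀ i, MvPolynomial.eval p (q i) = 0) → p = 0)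
    (z w : MvPolynomial (Fin (m + 1)) ℂ)
    (hz : z.IsHomogeneous 1) (hw : w.IsHomogeneous 1)
    (hzw : LinearIndependent ℂ ![z, w]) :
    2 * m - 1 ≤ Module.finrank ℂ
      (Submodule.span ℂ
        {x : MvPolynomial (Fin (m + 1)) ℂ ⧸ Ideal.span (Set.range q) |
          ∃ v : MvPolynomial (Fin (m + 1)) ℂ, v.IsHomogeneous 1 ∧
            (x = Ideal.Quotient.mkₐ ℂ (Ideal.span (Set.range q)) (z * v) ∨
             x = Ideal.Quotient.mkₐ ℂ (Ideal.span (Set.range q)) (w * v))}) := by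
  classical
  have hm1 : (1:ℕ) ≤ m - 1 := by omega
  set I := Ideal.span (Set.range q) with hI
  set π := Ideal.Quotient.mkₐ ℂ I with hπ
  set ζ : Fin (m + 1) → ℂ := fun i => coeff (Finsupp.single i 1) z with hζdef
  set ω : Fin (m + 1) → ℂ := fun i => coeff (Finsupp.single i 1) w with hωdef
  have hzl : z = linform ζ := isHomogeneous_one_eq_linform z hz
  have hwl : w = linform ω := isHomogeneous_one_eq_linform w hw
  have hzne : z ≠ 0 := by have := hzw.ne_zero 0; simpa using this
  have hζne : ζ ≠ 0 := fun h => hzne (by rw [hzl, h, linform_zero])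
  have hns : ¬ ∃ c : ℂ, ω = c • ζ := by
    rintro ⟨c, hc⟩
    have hwz : w = c • z := by
      rw [hzl, hwl, hc, linform_smul, ← smul_eq_C_mul]
    rw [linearIndependent_fin2] at hzw
    rcases eq_or_ne c 0 with rfl | hc0
    · exact hzw.1 (show w = 0 by rw [hwz, zero_smul])
    · exact hzw.2 c⁻¹ (show c⁻¹ • w = z by
        rw [hwz, smul_smul, inv_mul_cancel₀ hc0, one_smul])
  set K : ((Fin (m + 1) → ℂ) × (Fin (m + 1) → ℂ)) →ₗ[ℂ] MvPolynomial (Fin (m + 1)) ℂ :=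
    ((LinearMap.mulLeft ℂ z).comp (linformₗ.comp (LinearMap.fst ℂ _ _)))
      + ((LinearMap.mulLeft ℂ w).comp (linformₗ.comp (LinearMap.snd ℂ _ _))) with hK
  have hKapp : ∀ ab : (Fin (m + 1) → ℂ) × (Fin (m + 1) → ℂ),
      K ab = z * linform ab.1 + w * linform ab.2 := fun ab => rfl
  set Φ : ((Fin (m + 1) → ℂ) × (Fin (m + 1) → ℂ)) →ₗ[ℂ]
      (MvPolynomial (Fin (m + 1)) ℂ ⧸ I) := π.toLinearMap.comp K with hΦ
  have hΦapp : ∀ ab, Φ ab = π (K ab) := fun _ => rfl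
  have hspan : Submodule.span ℂ
      {x : MvPolynomial (Fin (m + 1)) ℂ ⧸ I |
        ∃ v : MvPolynomial (Fin (m + 1)) ℂ, v.IsHomogeneous 1 ∧
          (x = π (z * v) ∨ x = π (w * v))} = LinearMap.range Φ := by
    apply le_antisymm
    · rw [Submodule.span_le]
      rintro x ⟨v, hv, (rfl | rfl)⟩
      · refine ⟨((fun i => coeff (Finsupp.single i 1) v), 0), ?_⟩
        rw [hΦapp, hKapp]
        simp only [linform_zero, mul_zero, add_zero]
        rw [← isHomogeneous_one_eq_linform v hv]
      · refine ⟨(0, (fun i => coeff (Finsupp.single i 1) v)), ?_⟩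
        rw [hΦapp, hKapp]
        simp only [linform_zero, mul_zero, zero_add]
        rw [← isHomogeneous_one_eq_linform v hv]
    · rintro x ⟨ab, rfl⟩
      rw [hΦapp, hKapp, map_add]
      exact Submodule.add_mem _
        (Submodule.subset_span ⟨linform ab.1, linform_isHomogeneous _, Or.inl rfl⟩)
        (Submodule.subset_span ⟨linform ab.2, linform_isHomogeneous _, Or.inr rfl⟩)
  rw [hspan]
  have hrn := LinearMap.finrank_range_add_finrank_ker Φ
  have hdom : Module.finrank ℂ ((Fin (m + 1) → ℂ) × (Fin (m + 1) → ℂ)) = 2 * (m + 1) := by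
    rw [Module.finrank_prod, Module.finrank_pi]
    simp [Fintype.card_fin]
    ring
  set Q : Submodule ℂ (MvPolynomial (Fin (m + 1)) ℂ) := Submodule.span ℂ (Set.range q) with hQ
  haveI hQfin : FiniteDimensional ℂ Q := FiniteDimensional.span_of_finite ℂ (Set.finite_range q)
  have hKmem : ∀ ab ∈ LinearMap.ker Φ, K ab ∈ Q := by
    intro ab hab
    have h0 : π (K ab) = 0 := hab
    have hmem : K ab ∈ I := by
      rwa [hπ, Ideal.Quotient.mkₐ_eq_mk, Ideal.Quotient.eq_zero_iff_mem] at h0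
    refine quadric_mem_span q hhom ?_ hmem
    rw [hKapp]
    exact (hz.mul (linform_isHomogeneous _)).add (hw.mul (linform_isHomogeneous _))
  set K' := K.comp (LinearMap.ker Φ).subtype with hK'
  have hrn2 := LinearMap.finrank_range_add_finrank_ker K'
  have hkerK : LinearMap.ker K ≤ Submodule.span ℂ
      {((ω, -ζ) : (Fin (m + 1) → ℂ) × (Fin (m + 1) → ℂ))} := by
    rintro ⟨a, b⟩ hab
    rw [LinearMap.mem_ker, hKapp] at hab
    have h0 : linform ζ * linform a + linform ω * linform b = 0 := by
      rw [← hzl, ← hwl]; exact hab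
    obtain ⟨c, hc1, hc2⟩ := pair_rel ζ ω a b hζne hns h0
    refine Submodule.mem_span_singleton.2 ⟨c, ?_⟩
    have : c • ((ω, -ζ) : (Fin (m + 1) → ℂ) × (Fin (m + 1) → ℂ)) = (c • ω, c • -ζ) := rfl
    rw [this, smul_neg, ← hc1, ← hc2]
  have hker1 : Module.finrank ℂ (LinearMap.ker K') ≤ 1 := by
    have hmaple : Submodule.map (LinearMap.ker Φ).subtype (LinearMap.ker K')
        ≤ Submodule.span ℂ {((ω, -ζ) : (Fin (m + 1) → ℂ) × (Fin (m + 1) → ℂ))} := by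
      rintro x ⟨y, hy, rfl⟩
      exact hkerK (by simpa [hK', LinearMap.mem_ker] using hy)
    have heq : Module.finrank ℂ (LinearMap.ker K')
        = Module.finrank ℂ (Submodule.map (LinearMap.ker Φ).subtype (LinearMap.ker K')) :=
      (Submodule.equivMapOfInjective _ (Submodule.injective_subtype _) _).finrank_eq
    rw [heq]
    exact le_trans (Submodule.finrank_mono hmaple) (finrank_span_singleton_le _)
  have hQle : Module.finrank ℂ Q ≤ m + 1 := by
    refine le_trans (finrank_span_le_card _) ?_
    rw [Set.toFinset_range]
    exact le_trans Finset.card_image_le (by simp)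
  have hRle : Module.finrank ℂ (Q ⊓ LinearMap.range K : Submodule ℂ _) ≤ 2 := by
    by_contra hR3'
    push_neg at hR3'
    -- construct the restriction to the common kernel of ζ, ω
    set ζf : (Fin (m + 1) → ℂ) →ₗ[ℂ] ℂ :=
      { toFun := dot ζ
        map_add' := dot_add ζ
        map_smul' := fun c p => dot_smul ζ c p } with hζf
    set ωf : (Fin (m + 1) → ℂ) →ₗ[ℂ] ℂ :=
      { toFun := dot ω
        map_add' := dot_add ω
        map_smul' := fun c p => dot_smul ω c p } with hωf
    set G2 := ζf.prod ωf with hG2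
    set E := LinearMap.ker G2 with hE
    have hEr : m - 1 ≤ Module.finrank ℂ E := by
      have h1 := LinearMap.finrank_range_add_finrank_ker G2
      have h2 : Module.finrank ℂ (LinearMap.range G2) ≤ 2 := by
        have h3 := Submodule.finrank_le (LinearMap.range G2)
        have h4 : Module.finrank ℂ (ℂ × ℂ) = 2 := by
          rw [Module.finrank_prod, Module.finrank_self]
        omega
      have h3 : Module.finrank ℂ (Fin (m + 1) → ℂ) = m + 1 := by simp
      rw [← hE] at h1
      omega
    set bE := Module.finBasis ℂ E with hbE
    set vv : Fin (m - 1) → (Fin (m + 1) → ℂ) :=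
      fun l => (bE (Fin.castLE hEr l) : Fin (m + 1) → ℂ) with hvv
    have hvvζ : ∀ l, dot ζ (vv l) = 0 ∧ dot ω (vv l) = 0 := by
      intro l
      have hmem : G2 ((bE (Fin.castLE hEr l) : Fin (m + 1) → ℂ)) = 0 :=
        (bE (Fin.castLE hEr l)).2
      exact ⟨congrArg Prod.fst hmem, congrArg Prod.snd hmem⟩
    have hvind : LinearIndependent ℂ vv :=
      (bE.linearIndependent.comp (Fin.castLE hEr) (Fin.castLE_injective _)).map'
        E.subtype (Submodule.ker_subtype E)
    set J : (Fin (m - 1) → ℂ) →ₗ[ℂ] (Fin (m + 1) → ℂ) :=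
      { toFun := fun a => ∑ l, a l • vv l
        map_add' := by intro a b; simp [add_smul, Finset.sum_add_distrib]
        map_smul' := by intro c a; simp [smul_smul, Finset.smul_sum] } with hJ
    have hJapp : ∀ a, J a = ∑ l, a l • vv l := fun _ => rfl
    have hJz : ∀ a, J a = 0 → a = 0 := by
      intro a ha
      rw [Fintype.linearIndependent_iff] at hvind
      exact funext (hvind a ha)
    have hJdot : ∀ y, dot ζ (J y) = 0 ∧ dot ω (J y) = 0 := by
      intro y
      constructor
      · have h1 : dot ζ (J y) = ζf (J y) := rfl
        rw [h1, hJapp, map_sum]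
        refine Finset.sum_eq_zero fun l _ => ?_
        rw [map_smul]
        have : ζf (vv l) = 0 := (hvvζ l).1
        rw [this, smul_zero]
      · have h1 : dot ω (J y) = ωf (J y) := rfl
        rw [h1, hJapp, map_sum]
        refine Finset.sum_eq_zero fun l _ => ?_
        rw [map_smul]
        have : ωf (vv l) = 0 := (hvvζ l).2
        rw [this, smul_zero]
    set Ψ : MvPolynomial (Fin (m + 1)) ℂ →ₐ[ℂ] MvPolynomial (Fin (m - 1)) ℂ :=
      MvPolynomial.aeval (fun i => linform (fun l => vv l i)) with hΨdef
    have hΨX : ∀ i, Ψ (X i) = linform (fun l => vv l i) := by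
      intro i; rw [hΨdef]; exact aeval_X _ i
    have hΨeval : ∀ (f : MvPolynomial (Fin (m + 1)) ℂ) (y : Fin (m - 1) → ℂ),
        eval y (Ψ f) = eval (J y) f := by
      intro f y
      induction f using MvPolynomial.induction_on with
      | C a => simp [hΨdef]
      | add p r hp hr => simp [map_add, hp, hr]
      | mul_X p i hp =>
        rw [map_mul, map_mul, map_mul, hp]
        congr 1
        rw [hΨX i, eval_linform, eval_X]
        show dot (fun l => vv l i) y = J y i
        rw [hJapp]
        simp [dot, Finset.sum_apply, Pi.smul_apply, smul_eq_mul, mul_comm]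
    have hΨz : Ψ z = 0 := by
      apply MvPolynomial.funext
      intro y
      rw [map_zero, hΨeval z y, hzl, eval_linform]
      exact (hJdot y).1
    have hΨw : Ψ w = 0 := by
      apply MvPolynomial.funext
      intro y
      rw [map_zero, hΨeval w y, hwl, eval_linform]
      exact (hJdot y).2
    set ΨQ := Ψ.toLinearMap.comp Q.subtype with hΨQ
    have hrnQ := LinearMap.finrank_range_add_finrank_ker ΨQ
    have hRker : Submodule.comap Q.subtype (Q ⊓ LinearMap.range K) ≤ LinearMap.ker ΨQ := by
      rintro x hx
      obtain ⟨-, ab, hab⟩ := hx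
      rw [LinearMap.mem_ker]
      show Ψ (x : MvPolynomial (Fin (m + 1)) ℂ) = 0
      have hab' : K ab = (x : MvPolynomial (Fin (m + 1)) ℂ) := hab
      rw [← hab', hKapp, map_add, map_mul, map_mul, hΨz, hΨw, zero_mul, zero_mul, add_zero]
    have hcomapeq : Module.finrank ℂ (Submodule.comap Q.subtype (Q ⊓ LinearMap.range K))
        = Module.finrank ℂ (Q ⊓ LinearMap.range K : Submodule ℂ _) :=
      (Submodule.comapSubtypeEquivOfLe inf_le_left).finrank_eq
    have hker3 : 3 ≤ Module.finrank ℂ (LinearMap.ker ΨQ) := by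
      have hmono := Submodule.finrank_mono hRker
      omega
    have hrangeΨQ : Module.finrank ℂ (LinearMap.range ΨQ) ≤ m - 2 := by omega
    have hrangeeq : LinearMap.range ΨQ
        = Submodule.span ℂ (Set.range fun j => Ψ (q j)) := by
      rw [hΨQ, LinearMap.range_comp, Submodule.range_subtype, hQ, Submodule.map_span]
      congr 1
      rw [← Set.range_comp]
      rfl
    haveI : FiniteDimensional ℂ (Submodule.span ℂ (Set.range fun j => Ψ (q j))) :=
      FiniteDimensional.span_of_finite ℂ (Set.finite_range _)
    have hdle : Module.finrank ℂ (Submodule.span ℂ (Set.range fun j => Ψ (q j))) ≤ m - 2 := by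
      rw [← hrangeeq]; exact hrangeΨQ
    set cB := Module.finBasis ℂ (Submodule.span ℂ (Set.range fun j => Ψ (q j))) with hcB
    have hhomQ' : Submodule.span ℂ (Set.range fun j => Ψ (q j))
        ≤ homogeneousSubmodule (Fin (m - 1)) ℂ 2 := by
      rw [Submodule.span_le]
      rintro x ⟨j, rfl⟩
      have := (hhom j).aeval (fun i => linform (fun l => vv l i))
        (fun i => linform_isHomogeneous _)
      simpa [hΨdef] using this
    obtain ⟨y, hy0, hyz⟩ := exists_common_zero (by omega :
        Module.finrank ℂ (Submodule.span ℂ (Set.range fun j => Ψ (q j))) < m - 1)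
      (fun l => (cB l : MvPolynomial (Fin (m - 1)) ℂ))
      (fun l => hhomQ' (cB l).2)
    have hry : ∀ j, eval y (Ψ (q j)) = 0 := by
      intro j
      have hmem : Ψ (q j) ∈ Submodule.span ℂ (Set.range fun j => Ψ (q j)) :=
        Submodule.subset_span ⟨j, rfl⟩
      have hrepr := cB.sum_repr ⟨Ψ (q j), hmem⟩
      have hcoe : Ψ (q j)
          = ∑ l, cB.repr ⟨Ψ (q j), hmem⟩ l • (cB l : MvPolynomial (Fin (m - 1)) ℂ) := by
        have h2 := congrArg (Subtype.val) hrepr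
        rw [Submodule.coe_sum] at h2
        simp only [Submodule.coe_smul] at h2
        exact h2.symm
      rw [hcoe, map_sum]
      refine Finset.sum_eq_zero fun l _ => ?_
      rw [MvPolynomial.smul_eval, hyz l, mul_zero]
    have hJy0 : J y = 0 := by
      apply hci
      intro j
      rw [← hΨeval (q j) y]
      exact hry j
    exact hy0 (hJz y hJy0)
  have hrangeK' : Module.finrank ℂ (LinearMap.range K') ≤ 2 := by
    have hle : LinearMap.range K' ≤ Q ⊓ LinearMap.range K := by
      rintro x ⟨y, rfl⟩
      exact ⟨hKmem y.1 y.2, ⟨y.1, rfl⟩⟩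
    haveI : FiniteDimensional ℂ (Q ⊓ LinearMap.range K : Submodule ℂ _) :=
      Submodule.finiteDimensional_of_le inf_le_left
    exact le_trans (Submodule.finrank_mono hle) hRle
  omega
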